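/- Let F be a field, q ∈ F nonzero and not a root of unity, and d ≥ 1. With T_q and Z defined as above, one has (T_q Z)³ = (-1)^d q^{-d(d-1)} I, i.e., T_q Z T_q Z T_q Z = (-1)^d q^{-d(d-1)} times the identity matrix. -/

import Mathlib

/-- The symmetric q-integer `[n]_q = (q^n - q^{-n})/(q - q⁻¹)`. -/
def qInt {F : Type*} [Field F] (q : F) (n : ℕ) : F :=
  (q ^ n - q⁻¹ ^ n) / (q - q⁻¹)

/-- The q-factorial `[n]!_q`. -/
def qFact {F : Type*} [Field F] (q : F) : ℕ → F
  | 0 => 1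
  | n + 1 => qInt q (n + 1) * qFact q n

/-- The Gaussian q-binomial coefficient `[n choose i]_q`. -/
def qBinom {F : Type*} [Field F] (q : F) (n i : ℕ) : F :=
  qFact q n / (qFact q i * qFact q (n - i))

/-- The lower triangular matrix `T_q` with `(i,j)`-entry
`(-1)^j q^{j(1-i)} [i choose j]_q` for `j ≤ i`. -/
def Tmat {F : Type*} [Field F] (d : ℕ) (q : F) :
    Matrix (Fin (d + 1)) (Fin (d + 1)) F :=
  Matrix.of fun i j =>
    if (j : ℕ) ≤ (i : ℕ) then
      (-1) ^ (j : ℕ) * q ^ (((j : ℕ) : ℤ) * (1 - ((i : ℕ) : ℤ))) * qBinom q (i : ℕ) (j : ℕ)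
    else 0

/-- The matrix `Z` with `(i,j)`-entry `δ_{i+j,d}`. -/
def Zmat (F : Type*) [Field F] (d : ℕ) :
    Matrix (Fin (d + 1)) (Fin (d + 1)) F :=
  Matrix.of fun i j => if (i : ℕ) + (j : ℕ) = d then 1 else 0

section Basics
variable {F : Type*} [Field F] {q : F} (hq : q ≠ 0)
  (hroot : ∀ n : ℕ, 0 < n → q ^ n ≠ 1)

include hq hroot

lemma hqq : q - q⁻¹ ≠ 0 := by
  intro h
  have h2 : q * q = 1 := by
    have := sub_eq_zero.mp h
    field_simp at this
    linear_combination this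
  exact hroot 2 (by norm_num) (by rw [pow_two]; exact h2)

lemma qInt_ne (n : ℕ) (hn : 0 < n) : qInt q n ≠ 0 := by
  have hnum : q ^ n - q⁻¹ ^ n ≠ 0 := by
    intro h
    have h1 : q ^ n = q⁻¹ ^ n := sub_eq_zero.mp h
    have h2 : q ^ (n + n) = 1 := by
      rw [pow_add]; nth_rewrite 2 [h1]; rw [← mul_pow, mul_inv_cancel₀ hq, one_pow]
    exact hroot (n + n) (by omega) h2
  exact div_ne_zero hnum (hqq hq hroot)

lemma qFact_ne (n : ℕ) : qFact q n ≠ 0 := by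
  induction n with
  | zero => simp [qFact]
  | succ m ih => exact mul_ne_zero (qInt_ne hq hroot (m+1) (by omega)) ih

lemma qInt_add (a b : ℕ) :
    qInt q (a + b) = q ^ (b : ℤ) * qInt q a + q ^ (-(a : ℤ)) * qInt q b := by
  have h := hqq hq hroot
  rw [qInt, qInt, qInt, zpow_natCast, zpow_neg, zpow_natCast,
    ← mul_div_assoc, ← mul_div_assoc, ← add_div]
  congr 1
  have hpa : q ^ a ≠ 0 := pow_ne_zero _ hq
  simp only [inv_pow]
  field_simp
  ring
end Basics

/-- Guarded q-binomial coefficient. -/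
def qB {F : Type*} [Field F] (q : F) (n m : ℕ) : F :=
  if m ≤ n then qBinom q n m else 0

section QB
variable {F : Type*} [Field F] {q : F} (hq : q ≠ 0)
  (hroot : ∀ n : ℕ, 0 < n → q ^ n ≠ 1)

lemma qB_eq {n m : ℕ} (h : m ≤ n) :
    qB q n m = qFact q n / (qFact q m * qFact q (n - m)) := by
  rw [qB, if_pos h, qBinom]

lemma qB_gt {n m : ℕ} (h : n < m) : qB q n m = 0 := by
  rw [qB, if_neg (by omega)]

include hq hroot

lemma qB_zero (n : ℕ) : qB q n 0 = 1 := by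
  rw [qB_eq (by omega)]
  simp [qFact]
  exact qFact_ne hq hroot n

lemma qB_self (n : ℕ) : qB q n n = 1 := by
  rw [qB_eq le_rfl]
  simp [qFact]
  exact qFact_ne hq hroot n

omit hq hroot in
lemma qB_symm {n m : ℕ} (h : m ≤ n) : qB q n m = qB q n (n - m) := by
  rw [qB_eq h, qB_eq (by omega), Nat.sub_sub_self h, mul_comm]

lemma pascalA (n m : ℕ) :
    qB q (n + 1) (m + 1)
      = q ^ ((m : ℤ) + 1) * qB q n (m + 1) + q ^ ((m : ℤ) - n) * qB q n m := by
  rcases lt_trichotomy m n with hlt | heq | hgt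
  · have hf := qFact_ne hq hroot
    have e1 : n - m = (n - m - 1) + 1 := by omega
    have e2 : qFact q (n - m) = qInt q (n - m) * qFact q (n - m - 1) := by
      rw [e1]; rw [qFact]; rw [← e1]
    have h1 : qB q (n + 1) (m + 1)
        = qInt q (n + 1) * qFact q n / (qFact q (m + 1) * qFact q (n - m)) := by
      rw [qB_eq (by omega)]
      have : n + 1 - (m + 1) = n - m := by omega
      rw [this, qFact]
    have h2 : qB q n (m + 1)
        = qInt q (n - m) * qFact q n / (qFact q (m + 1) * qFact q (n - m)) := by
      rw [qB_eq (by omega)]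
      have : n - (m + 1) = n - m - 1 := by omega
      rw [this, e2]
      have hz : qInt q (n - m) ≠ 0 := qInt_ne hq hroot _ (by omega)
      have h01 : qFact q (m + 1) ≠ 0 := hf _
      have h02 : qFact q (n - m - 1) ≠ 0 := hf _
      field_simp
    have h3 : qB q n m
        = qInt q (m + 1) * qFact q n / (qFact q (m + 1) * qFact q (n - m)) := by
      rw [qB_eq (by omega)]
      have : qFact q (m + 1) = qInt q (m + 1) * qFact q m := by rw [qFact]
      rw [this]
      have hz : qInt q (m + 1) ≠ 0 := qInt_ne hq hroot _ (by omega)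
      have h01 : qFact q m ≠ 0 := hf _
      have h02 : qFact q (n - m) ≠ 0 := hf _
      field_simp
    have key : qInt q (n + 1) = q ^ ((m : ℤ) + 1) * qInt q (n - m)
        + q ^ ((m : ℤ) - n) * qInt q (m + 1) := by
      have := qInt_add hq hroot (n - m) (m + 1)
      have e3 : n - m + (m + 1) = n + 1 := by omega
      rw [e3] at this
      rw [this]
      push_cast [Nat.cast_sub (le_of_lt hlt)]
      ring
    rw [h1, h2, h3, key]
    ring
  · subst heq
    rw [qB_self hq hroot, qB_gt (by omega), qB_self hq hroot]
    simp
  · rw [qB_gt (by omega), qB_gt (by omega), qB_gt (by omega)]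
    simp

lemma pascalB (n m : ℕ) :
    qB q (n + 1) (m + 1)
      = q ^ (-((m : ℤ) + 1)) * qB q n (m + 1) + q ^ ((n : ℤ) - m) * qB q n m := by
  rcases lt_trichotomy m n with hlt | heq | hgt
  · have hf := qFact_ne hq hroot
    have e1 : n - m = (n - m - 1) + 1 := by omega
    have e2 : qFact q (n - m) = qInt q (n - m) * qFact q (n - m - 1) := by
      rw [e1]; rw [qFact]; rw [← e1]
    have h1 : qB q (n + 1) (m + 1)
        = qInt q (n + 1) * qFact q n / (qFact q (m + 1) * qFact q (n - m)) := by
      rw [qB_eq (by omega)]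
      have : n + 1 - (m + 1) = n - m := by omega
      rw [this, qFact]
    have h2 : qB q n (m + 1)
        = qInt q (n - m) * qFact q n / (qFact q (m + 1) * qFact q (n - m)) := by
      rw [qB_eq (by omega)]
      have : n - (m + 1) = n - m - 1 := by omega
      rw [this, e2]
      have hz : qInt q (n - m) ≠ 0 := qInt_ne hq hroot _ (by omega)
      have h01 : qFact q (m + 1) ≠ 0 := hf _
      have h02 : qFact q (n - m - 1) ≠ 0 := hf _
      field_simp
    have h3 : qB q n m
        = qInt q (m + 1) * qFact q n / (qFact q (m + 1) * qFact q (n - m)) := by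
      rw [qB_eq (by omega)]
      have : qFact q (m + 1) = qInt q (m + 1) * qFact q m := by rw [qFact]
      rw [this]
      have hz : qInt q (m + 1) ≠ 0 := qInt_ne hq hroot _ (by omega)
      have h01 : qFact q m ≠ 0 := hf _
      have h02 : qFact q (n - m) ≠ 0 := hf _
      field_simp
    have key : qInt q (n + 1) = q ^ (-((m : ℤ) + 1)) * qInt q (n - m)
        + q ^ ((n : ℤ) - m) * qInt q (m + 1) := by
      have := qInt_add hq hroot (m + 1) (n - m)
      have e3 : m + 1 + (n - m) = n + 1 := by omega
      rw [e3] at this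
      rw [this]
      push_cast [Nat.cast_sub (le_of_lt hlt)]
      ring
    rw [h1, h2, h3, key]
    ring
  · subst heq
    rw [qB_self hq hroot, qB_gt (by omega), qB_self hq hroot]
    simp
  · rw [qB_gt (by omega), qB_gt (by omega), qB_gt (by omega)]
    simp
end QB

section Sums
open Finset
variable {F : Type*} [Field F] {q : F} (hq : q ≠ 0)
  (hroot : ∀ n : ℕ, 0 < n → q ^ n ≠ 1)

include hq hroot

lemma sumE_rec (n : ℕ) :
    ∑ m ∈ range (n + 2), (-1 : F) ^ m * q ^ ((m : ℤ) * n) * qB q (n + 1) m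
      = (1 - q ^ (2 * (n : ℤ))) *
        ∑ m ∈ range (n + 1), (-1 : F) ^ m * q ^ ((m : ℤ) * ((n : ℤ) - 1)) * qB q n m := by
  rw [Finset.sum_range_succ']
  have hstep : ∀ m ∈ range (n + 1),
      (-1 : F) ^ (m + 1) * q ^ (((m : ℤ) + 1) * n) * qB q (n + 1) (m + 1)
        = (-1 : F) ^ (m + 1) * q ^ (((m : ℤ) + 1) * ((n : ℤ) - 1)) * qB q n (m + 1)
          + (-(q ^ (2 * (n : ℤ)))) * ((-1 : F) ^ m * q ^ ((m : ℤ) * ((n : ℤ) - 1)) * qB q n m) := by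
    intro m _
    rw [pascalB hq hroot]
    push_cast
    ring_nf
    simp only [mul_assoc, ← zpow_add₀ hq]
    ring_nf
  rw [Finset.sum_congr rfl (by intro m hm; push_cast; exact hstep m hm)]
  rw [Finset.sum_add_distrib]
  have h1 : ∑ m ∈ range (n + 1),
      (-1 : F) ^ (m + 1) * q ^ (((m : ℤ) + 1) * ((n : ℤ) - 1)) * qB q n (m + 1)
      = (∑ m ∈ range (n + 1), (-1 : F) ^ m * q ^ ((m : ℤ) * ((n : ℤ) - 1)) * qB q n m) - 1 := by
    have e := Finset.sum_range_succ' (fun m => (-1 : F) ^ m * q ^ ((m : ℤ) * ((n : ℤ) - 1)) * qB q n m) (n + 1)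
    simp only [Nat.cast_add, Nat.cast_one] at e ⊢
    have e2 : ∑ m ∈ range (n + 2), (-1 : F) ^ m * q ^ ((m : ℤ) * ((n : ℤ) - 1)) * qB q n m
        = ∑ m ∈ range (n + 1), (-1 : F) ^ m * q ^ ((m : ℤ) * ((n : ℤ) - 1)) * qB q n m := by
      rw [Finset.sum_range_succ, qB_gt (by omega)]
      ring
    rw [e2] at e
    rw [qB_zero hq hroot] at e
    push_cast at e
    simp only [zero_mul, zpow_zero, pow_zero, one_mul, mul_one] at e
    linear_combination -e
  rw [h1, ← Finset.mul_sum, qB_zero hq hroot]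
  push_cast
  simp only [zero_mul, zpow_zero, pow_zero, one_mul, mul_one]
  ring

lemma sumE (n : ℕ) (hn : 1 ≤ n) :
    ∑ m ∈ range (n + 1), (-1 : F) ^ m * q ^ ((m : ℤ) * ((n : ℤ) - 1)) * qB q n m = 0 := by
  induction n with
  | zero => omega
  | succ k ih =>
    rcases Nat.eq_zero_or_pos k with hk | hk
    · subst hk
      rw [Finset.sum_range_succ, Finset.sum_range_one]
      rw [qB_zero hq hroot, qB_self hq hroot]
      norm_num
    · have := sumE_rec hq hroot k
      have e : ((k : ℤ) + 1) - 1 = (k : ℤ) := by ring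
      calc ∑ m ∈ range (k + 1 + 1), (-1 : F) ^ m * q ^ ((m : ℤ) * (((k : ℕ) + 1 : ℤ) - 1)) * qB q (k + 1) m
          = ∑ m ∈ range (k + 2), (-1 : F) ^ m * q ^ ((m : ℤ) * (k : ℤ)) * qB q (k + 1) m := by
            apply Finset.sum_congr rfl; intro m _; push_cast; ring_nf
        _ = (1 - q ^ (2 * (k : ℤ))) * ∑ m ∈ range (k + 1), (-1 : F) ^ m * q ^ ((m : ℤ) * ((k : ℤ) - 1)) * qB q k m := this
        _ = 0 := by rw [ih hk]; ring
end Sums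

section Star
open Finset
variable {F : Type*} [Field F] {q : F} (hq : q ≠ 0)
  (hroot : ∀ n : ℕ, 0 < n → q ^ n ≠ 1)

include hq hroot

lemma star (i : ℕ) : ∀ d k : ℕ, i ≤ d → k ≤ d →
    ∑ j ∈ range (i + 1),
        (-1 : F) ^ j * q ^ ((j : ℤ) * ((k : ℤ) - (i : ℤ) + 1)) * qB q i j * qB q (d - j) k
      = q ^ (-(i : ℤ) * ((d : ℤ) - (k : ℤ))) * qB q (d - i) (d - k) := by
  induction i with
  | zero =>
    intro d k _ hk
    rw [Finset.sum_range_one]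
    simp only [Nat.sub_zero, Nat.cast_zero, zero_mul, neg_zero, zpow_zero, pow_zero, one_mul]
    rw [qB_self hq hroot, one_mul, qB_symm hk]
  | succ i ih =>
    intro d k hi hk
    by_cases hkd : k = d
    · subst hkd
      rw [Finset.sum_eq_single 0]
      · rw [qB_zero hq hroot]
        simp only [Nat.sub_zero]
        rw [qB_self hq hroot, Nat.sub_self, qB_zero hq hroot]
        push_cast
        simp only [zero_mul, mul_zero, sub_self, neg_zero, zpow_zero, pow_zero, one_mul, mul_one]
      · intro j hjm hj
        have hjm' := Finset.mem_range.mp hjm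
        have : qB q (k - j) k = 0 := qB_gt (by omega)
        rw [this, mul_zero]
      · intro h
        exact absurd (Finset.mem_range.mpr (by omega)) h
    · have hk' : k + 1 ≤ d := by omega
      have hi' : i + 1 ≤ d := hi
      rw [Finset.sum_range_succ']
      have hstep : ∀ j ∈ range (i + 1),
          (-1 : F) ^ (j + 1) * q ^ (((j : ℤ) + 1) * ((k : ℤ) - ((i : ℤ) + 1) + 1)) *
              qB q (i + 1) (j + 1) * qB q (d - (j + 1)) k
            = (-1 : F) ^ (j + 1) * q ^ (((j : ℤ) + 1) * ((k : ℤ) - (i : ℤ) + 1)) *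
                qB q i (j + 1) * qB q (d - (j + 1)) k
              + (-(q ^ ((k : ℤ) - 2 * (i : ℤ)))) *
                ((-1 : F) ^ j * q ^ ((j : ℤ) * ((k : ℤ) - (i : ℤ) + 1)) *
                  qB q i j * qB q (d - 1 - j) k) := by
        intro j hj
        have e0 : d - (j + 1) = d - 1 - j := by omega
        rw [pascalA hq hroot, e0]
        ring_nf
        simp only [mul_assoc, ← zpow_add₀ hq]
        ring_nf
      rw [Finset.sum_congr rfl (by intro j hj; push_cast; exact hstep j hj)]
      rw [Finset.sum_add_distrib]
      have hA : ∑ j ∈ range (i + 1),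
          (-1 : F) ^ (j + 1) * q ^ (((j : ℤ) + 1) * ((k : ℤ) - (i : ℤ) + 1)) *
            qB q i (j + 1) * qB q (d - (j + 1)) k
          = q ^ (-(i : ℤ) * ((d : ℤ) - (k : ℤ))) * qB q (d - i) (d - k) - qB q d k := by
        have e := Finset.sum_range_succ'
          (fun j => (-1 : F) ^ j * q ^ ((j : ℤ) * ((k : ℤ) - (i : ℤ) + 1)) *
            qB q i j * qB q (d - j) k) (i + 1)
        rw [Finset.sum_range_succ, qB_gt (show i < i + 1 by omega)] at e
        rw [ih d k (by omega) hk] at e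
        rw [qB_zero hq hroot, Nat.sub_zero] at e
        push_cast at e
        simp only [zero_mul, mul_zero, zpow_zero, pow_zero, one_mul, mul_one] at e
        linear_combination -e
      have hB : ∑ j ∈ range (i + 1),
          (-(q ^ ((k : ℤ) - 2 * (i : ℤ)))) *
            ((-1 : F) ^ j * q ^ ((j : ℤ) * ((k : ℤ) - (i : ℤ) + 1)) *
              qB q i j * qB q (d - 1 - j) k)
          = (-(q ^ ((k : ℤ) - 2 * (i : ℤ)))) *
            (q ^ (-(i : ℤ) * (((d : ℤ) - 1) - (k : ℤ))) * qB q (d - 1 - i) (d - 1 - k)) := by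
        rw [← Finset.mul_sum]
        congr 1
        have := ih (d - 1) k (by omega) (by omega)
        rw [show ((d - 1 : ℕ) : ℤ) = (d : ℤ) - 1 from by omega] at this
        exact this
      rw [hA, hB, qB_zero hq hroot]
      push_cast
      simp only [Nat.sub_zero, zero_mul, mul_zero, zpow_zero, pow_zero, one_mul, mul_one]
      -- now the pure Pascal-B algebra step
      have hP := pascalB hq hroot (n := d - i - 1) (m := d - k - 1)
      rw [show d - i - 1 + 1 = d - i from by omega, show d - k - 1 + 1 = d - k from by omega] at hP
      rw [show d - (i + 1) = d - i - 1 from by omega,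
          show d - 1 - i = d - i - 1 from by omega,
          show d - 1 - k = d - k - 1 from by omega]
      rw [hP]
      rw [show ((d - i - 1 : ℕ) : ℤ) = (d : ℤ) - (i : ℤ) - 1 from by omega,
          show ((d - k - 1 : ℕ) : ℤ) = (d : ℤ) - (k : ℤ) - 1 from by omega]
      ring_nf
      simp only [mul_assoc, ← zpow_add₀ hq]
      ring_nf
end Star

section Matrices
open Finset
variable {F : Type*} [Field F] {q : F} (hq : q ≠ 0)
  (hroot : ∀ n : ℕ, 0 < n → q ^ n ≠ 1)

def Tinv {F : Type*} [Field F] (d : ℕ) (q : F) :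
    Matrix (Fin (d + 1)) (Fin (d + 1)) F :=
  Matrix.of fun i j =>
    if (j : ℕ) ≤ (i : ℕ) then
      (-1) ^ (j : ℕ) * q ^ (((j : ℕ) : ℤ) * (((i : ℕ) : ℤ) - 1)) * qBinom q (i : ℕ) (j : ℕ)
    else 0

lemma Tmat_apply (d : ℕ) (i j : Fin (d + 1)) :
    Tmat d q i j
      = (-1 : F) ^ (j : ℕ) * q ^ (((j : ℕ) : ℤ) * (1 - ((i : ℕ) : ℤ))) * qB q (i : ℕ) (j : ℕ) := by
  by_cases h : (j : ℕ) ≤ (i : ℕ)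
  · simp only [Tmat, Matrix.of_apply, if_pos h, qB, qBinom]
  · simp only [Tmat, Matrix.of_apply, if_neg h, qB_gt (show (i:ℕ) < (j:ℕ) by omega), mul_zero]

lemma Tinv_apply (d : ℕ) (i j : Fin (d + 1)) :
    Tinv d q i j
      = (-1 : F) ^ (j : ℕ) * q ^ (((j : ℕ) : ℤ) * (((i : ℕ) : ℤ) - 1)) * qB q (i : ℕ) (j : ℕ) := by
  by_cases h : (j : ℕ) ≤ (i : ℕ)
  · simp only [Tinv, Matrix.of_apply, if_pos h, qB, qBinom]
  · simp only [Tinv, Matrix.of_apply, if_neg h, qB_gt (show (i:ℕ) < (j:ℕ) by omega), mul_zero]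

lemma Zmul_apply (d : ℕ) (M : Matrix (Fin (d + 1)) (Fin (d + 1)) F) (j k : Fin (d + 1)) :
    (Zmat F d * M) j k = M ⟨d - (j : ℕ), by omega⟩ k := by
  rw [Matrix.mul_apply]
  rw [Finset.sum_eq_single (⟨d - (j : ℕ), by omega⟩ : Fin (d + 1))]
  · have : (j : ℕ) + (d - (j : ℕ)) = d := by omega
    simp [Zmat, this]
  · intro b _ hb
    have : ¬ ((j : ℕ) + (b : ℕ) = d) := by
      intro hcon
      apply hb
      apply Fin.ext
      simp only
      omega
    simp [Zmat, this]
  · intro h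
    exact absurd (Finset.mem_univ _) h

lemma mulZ_apply (d : ℕ) (M : Matrix (Fin (d + 1)) (Fin (d + 1)) F) (i j : Fin (d + 1)) :
    (M * Zmat F d) i j = M i ⟨d - (j : ℕ), by omega⟩ := by
  rw [Matrix.mul_apply]
  rw [Finset.sum_eq_single (⟨d - (j : ℕ), by omega⟩ : Fin (d + 1))]
  · have : (d - (j : ℕ)) + (j : ℕ) = d := by omega
    simp [Zmat, this]
  · intro b _ hb
    have : ¬ ((b : ℕ) + (j : ℕ) = d) := by
      intro hcon
      apply hb
      apply Fin.ext
      simp only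
      omega
    simp [Zmat, this]
  · intro h
    exact absurd (Finset.mem_univ _) h

lemma ZZ_eq_one (d : ℕ) : Zmat F d * Zmat F d = (1 : Matrix (Fin (d+1)) (Fin (d+1)) F) := by
  ext i k
  rw [Zmul_apply]
  by_cases h : i = k
  · subst h
    have : (d - (i : ℕ)) + (i : ℕ) = d := by omega
    simp [Zmat, Matrix.one_apply, this]
  · have hik : (i : ℕ) ≠ (k : ℕ) := fun hc => h (Fin.ext hc)
    have : ¬ ((d - (i : ℕ)) + (k : ℕ) = d) := by omega
    simp [Zmat, Matrix.one_apply, this, h]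

include hq hroot

lemma qB_mul_qB {a j c : ℕ} (hcj : c ≤ j) (hja : j ≤ a) :
    qB q a j * qB q j c = qB q a c * qB q (a - c) (j - c) := by
  have hf := qFact_ne (q := q) hq hroot
  rw [qB_eq hja, qB_eq hcj, qB_eq (show c ≤ a by omega), qB_eq (show j - c ≤ a - c by omega)]
  rw [show a - c - (j - c) = a - j from by omega]
  have h1 : qFact q j ≠ 0 := hf _
  have h2 : qFact q (a - j) ≠ 0 := hf _
  have h3 : qFact q c ≠ 0 := hf _
  have h4 : qFact q (j - c) ≠ 0 := hf _
  have h5 : qFact q (a - c) ≠ 0 := hf _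
  field_simp

omit hq hroot in
lemma hsgn (x y : ℕ) : ((-1 : F)) ^ (y + x) * (-1 : F) ^ y = (-1) ^ x := by
  rw [← pow_add, show y + x + y = x + 2 * y from by omega, pow_add, pow_mul]
  norm_num

lemma sumTinvT (a c e : ℕ) (hae : a ≤ e) :
    ∑ j ∈ range (e + 1),
        (-1 : F) ^ j * q ^ ((j : ℤ) * ((a : ℤ) - 1)) * qB q a j *
          ((-1 : F) ^ c * q ^ ((c : ℤ) * (1 - (j : ℤ))) * qB q j c)
      = if a = c then 1 else 0 := by
  rcases lt_trichotomy a c with hlt | heq | hgt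
  · rw [if_neg (by omega)]
    apply Finset.sum_eq_zero
    intro j hj
    rcases le_or_gt j a with h1 | h1
    · rw [qB_gt (show j < c by omega)]; ring
    · rw [qB_gt h1]; ring
  · subst heq
    rw [if_pos rfl]
    rw [Finset.sum_eq_single_of_mem a (Finset.mem_range.mpr (by omega))]
    · rw [qB_self hq hroot]
      have hA : ((-1 : F) ^ a) * ((-1 : F) ^ a) = 1 := by
        rw [← pow_add, show a + a = 2 * a from by omega, pow_mul]; norm_num
      have h1 : q ^ ((a : ℤ) * ((a : ℤ) - 1)) * q ^ ((a : ℤ) * (1 - (a : ℤ))) = 1 := by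
        rw [← zpow_add₀ hq, show (a : ℤ) * ((a : ℤ) - 1) + (a : ℤ) * (1 - (a : ℤ)) = 0 from by ring,
          zpow_zero]
      linear_combination (q ^ ((a : ℤ) * ((a : ℤ) - 1)) * q ^ ((a : ℤ) * (1 - (a : ℤ)))) * hA + h1
    · intro j _ hj
      rcases lt_or_gt_of_ne hj with h1 | h1
      · rw [qB_gt h1]; ring
      · rw [qB_gt h1]; ring
  · rw [if_neg (by omega)]
    set n := a - c with hn
    have hrestrict : ∑ j ∈ range (e + 1),
        (-1 : F) ^ j * q ^ ((j : ℤ) * ((a : ℤ) - 1)) * qB q a j *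
          ((-1 : F) ^ c * q ^ ((c : ℤ) * (1 - (j : ℤ))) * qB q j c)
        = ∑ j ∈ Finset.Icc c a,
        (-1 : F) ^ j * q ^ ((j : ℤ) * ((a : ℤ) - 1)) * qB q a j *
          ((-1 : F) ^ c * q ^ ((c : ℤ) * (1 - (j : ℤ))) * qB q j c) := by
      refine (Finset.sum_subset ?_ ?_).symm
      · intro x hx
        simp only [Finset.mem_Icc] at hx
        exact Finset.mem_range.mpr (by omega)
      · intro x _ hx
        simp only [Finset.mem_Icc, not_and_or, not_le] at hx
        rcases hx with h1 | h1
        · rw [qB_gt h1]; ring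
        · rw [qB_gt h1]; ring
    rw [hrestrict, show Finset.Icc c a = Finset.Ico c (a + 1) from by rw [Finset.Ico_add_one_right_eq_Icc],
      Finset.sum_Ico_eq_sum_range, show a + 1 - c = n + 1 from by omega]
    have hpt : ∀ j ∈ range (n + 1),
        (-1 : F) ^ (c + j) * q ^ (((c + j : ℕ) : ℤ) * ((a : ℤ) - 1)) * qB q a (c + j) *
          ((-1 : F) ^ c * q ^ ((c : ℤ) * (1 - ((c + j : ℕ) : ℤ))) * qB q (c + j) c)
        = (q ^ ((c : ℤ) * (n : ℤ)) * qB q a c) *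
            ((-1 : F) ^ j * q ^ ((j : ℤ) * ((n : ℤ) - 1)) * qB q n j) := by
      intro j hj
      have hjn : j ≤ n := by
        have := Finset.mem_range.mp hj; omega
      have hqb : qB q a (c + j) * qB q (c + j) c = qB q a c * qB q n j := by
        rw [qB_mul_qB hq hroot (by omega) (by omega), show c + j - c = j from by omega, ← hn]
      calc (-1 : F) ^ (c + j) * q ^ (((c + j : ℕ) : ℤ) * ((a : ℤ) - 1)) * qB q a (c + j) *
          ((-1 : F) ^ c * q ^ ((c : ℤ) * (1 - ((c + j : ℕ) : ℤ))) * qB q (c + j) c)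
          = ((-1 : F) ^ (c + j) * (-1 : F) ^ c) *
            (q ^ (((c + j : ℕ) : ℤ) * ((a : ℤ) - 1)) * q ^ ((c : ℤ) * (1 - ((c + j : ℕ) : ℤ)))) *
            (qB q a (c + j) * qB q (c + j) c) := by ring
        _ = (-1 : F) ^ j * q ^ ((((c + j : ℕ) : ℤ) * ((a : ℤ) - 1)) + ((c : ℤ) * (1 - ((c + j : ℕ) : ℤ)))) *
            (qB q a c * qB q n j) := by rw [hqb, hsgn, ← zpow_add₀ hq]
        _ = (q ^ ((c : ℤ) * (n : ℤ)) * qB q a c) *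
            ((-1 : F) ^ j * q ^ ((j : ℤ) * ((n : ℤ) - 1)) * qB q n j) := by
            rw [show (((c + j : ℕ) : ℤ) * ((a : ℤ) - 1)) + ((c : ℤ) * (1 - ((c + j : ℕ) : ℤ)))
                = (c : ℤ) * (n : ℤ) + (j : ℤ) * ((n : ℤ) - 1) from by
              rw [show ((n : ℕ) : ℤ) = (a : ℤ) - (c : ℤ) from by omega]; push_cast; ring]
            rw [zpow_add₀ hq]
            ring
    rw [Finset.sum_congr rfl hpt, ← Finset.mul_sum, sumE hq hroot n (by omega), mul_zero]

lemma TinvT (d : ℕ) : Tinv d q * Tmat d q = 1 := by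
  ext i k
  rw [Matrix.mul_apply]
  have hterm : ∀ j : Fin (d + 1), Tinv d q i j * Tmat d q j k
      = ((-1 : F) ^ (j : ℕ) * q ^ (((j : ℕ) : ℤ) * (((i : ℕ) : ℤ) - 1)) * qB q (i : ℕ) (j : ℕ))
        * ((-1 : F) ^ (k : ℕ) * q ^ (((k : ℕ) : ℤ) * (1 - ((j : ℕ) : ℤ))) * qB q (j : ℕ) (k : ℕ)) := by
    intro j
    rw [Tinv_apply, Tmat_apply]
  rw [Finset.sum_congr rfl (fun j _ => hterm j)]
  rw [Fin.sum_univ_eq_sum_range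
    (fun j => ((-1 : F) ^ j * q ^ ((j : ℤ) * (((i : ℕ) : ℤ) - 1)) * qB q (i : ℕ) j)
        * ((-1 : F) ^ (k : ℕ) * q ^ (((k : ℕ) : ℤ) * (1 - (j : ℤ))) * qB q j (k : ℕ)))]
  have := sumTinvT hq hroot (i : ℕ) (k : ℕ) d (by omega)
  rw [this, Matrix.one_apply]
  by_cases h : i = k
  · rw [if_pos h, if_pos (by rw [h])]
  · rw [if_neg h, if_neg (fun hc => h (Fin.ext hc))]

lemma sumTZT (d a c : ℕ) (hA : a ≤ d) (hC : c ≤ d) :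
    ∑ j ∈ range (d + 1),
        ((-1 : F) ^ j * q ^ ((j : ℤ) * (1 - (a : ℤ))) * qB q a j) *
          ((-1 : F) ^ c * q ^ ((c : ℤ) * (1 - ((d : ℤ) - (j : ℤ)))) * qB q (d - j) c)
      = (-1 : F) ^ c * q ^ ((c : ℤ) * (1 - (d : ℤ)) - (a : ℤ) * ((d : ℤ) - (c : ℤ))) *
          qB q (d - a) (d - c) := by
  have hrestrict : ∑ j ∈ range (d + 1),
        ((-1 : F) ^ j * q ^ ((j : ℤ) * (1 - (a : ℤ))) * qB q a j) *
          ((-1 : F) ^ c * q ^ ((c : ℤ) * (1 - ((d : ℤ) - (j : ℤ)))) * qB q (d - j) c)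
      = ∑ j ∈ range (a + 1),
        ((-1 : F) ^ j * q ^ ((j : ℤ) * (1 - (a : ℤ))) * qB q a j) *
          ((-1 : F) ^ c * q ^ ((c : ℤ) * (1 - ((d : ℤ) - (j : ℤ)))) * qB q (d - j) c) := by
    refine (Finset.sum_subset ?_ ?_).symm
    · intro x hx
      exact Finset.mem_range.mpr (by have := Finset.mem_range.mp hx; omega)
    · intro x _ hx
      have hax : a < x := by
        simp only [Finset.mem_range, not_lt] at hx; omega
      rw [qB_gt hax]
      ring
  have hpt : ∀ j ∈ range (a + 1),
      ((-1 : F) ^ j * q ^ ((j : ℤ) * (1 - (a : ℤ))) * qB q a j) *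
          ((-1 : F) ^ c * q ^ ((c : ℤ) * (1 - ((d : ℤ) - (j : ℤ)))) * qB q (d - j) c)
        = ((-1 : F) ^ c * q ^ ((c : ℤ) * (1 - (d : ℤ)))) *
            ((-1 : F) ^ j * q ^ ((j : ℤ) * ((c : ℤ) - (a : ℤ) + 1)) * qB q a j * qB q (d - j) c) := by
    intro j _
    calc ((-1 : F) ^ j * q ^ ((j : ℤ) * (1 - (a : ℤ))) * qB q a j) *
          ((-1 : F) ^ c * q ^ ((c : ℤ) * (1 - ((d : ℤ) - (j : ℤ)))) * qB q (d - j) c)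
        = ((-1 : F) ^ c * (-1 : F) ^ j) *
            (q ^ ((j : ℤ) * (1 - (a : ℤ))) * q ^ ((c : ℤ) * (1 - ((d : ℤ) - (j : ℤ))))) *
            (qB q a j * qB q (d - j) c) := by ring
      _ = ((-1 : F) ^ c * (-1 : F) ^ j) *
            (q ^ ((j : ℤ) * (1 - (a : ℤ)) + (c : ℤ) * (1 - ((d : ℤ) - (j : ℤ))))) *
            (qB q a j * qB q (d - j) c) := by rw [← zpow_add₀ hq]
      _ = ((-1 : F) ^ c * q ^ ((c : ℤ) * (1 - (d : ℤ)))) *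
            ((-1 : F) ^ j * q ^ ((j : ℤ) * ((c : ℤ) - (a : ℤ) + 1)) * qB q a j * qB q (d - j) c) := by
          rw [show (j : ℤ) * (1 - (a : ℤ)) + (c : ℤ) * (1 - ((d : ℤ) - (j : ℤ)))
              = (c : ℤ) * (1 - (d : ℤ)) + (j : ℤ) * ((c : ℤ) - (a : ℤ) + 1) from by ring,
            zpow_add₀ hq]
          ring
  rw [hrestrict, Finset.sum_congr rfl hpt, ← Finset.mul_sum, star hq hroot a d c hA hC,
    ← mul_assoc, mul_assoc ((-1 : F) ^ c), ← zpow_add₀ hq]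
  ring_nf

lemma TZT (d : ℕ) :
    Tmat d q * (Zmat F d * Tmat d q)
      = ((-1 : F) ^ d * q ^ (-((d : ℤ) * ((d : ℤ) - 1)))) •
          (Zmat F d * (Tinv d q * Zmat F d)) := by
  ext i k
  set a := (i : ℕ)
  set c := (k : ℕ)
  have hA : a ≤ d := by omega
  have hC : c ≤ d := by omega
  have hterm : ∀ j : Fin (d + 1), Tmat d q i j * (Zmat F d * Tmat d q) j k
      = ((-1 : F) ^ (j : ℕ) * q ^ (((j : ℕ) : ℤ) * (1 - (a : ℤ))) * qB q a (j : ℕ)) *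
          ((-1 : F) ^ c * q ^ ((c : ℤ) * (1 - ((d : ℤ) - ((j : ℕ) : ℤ)))) * qB q (d - (j : ℕ)) c) := by
    intro j
    rw [Zmul_apply, Tmat_apply, Tmat_apply]
    have h1 : ((⟨d - (j : ℕ), by omega⟩ : Fin (d + 1)) : ℕ) = d - (j : ℕ) := rfl
    rw [h1, show ((d - (j : ℕ) : ℕ) : ℤ) = (d : ℤ) - ((j : ℕ) : ℤ) from by omega]
  rw [Matrix.mul_apply, Finset.sum_congr rfl (fun j _ => hterm j)]
  rw [Fin.sum_univ_eq_sum_range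
    (fun j => ((-1 : F) ^ j * q ^ ((j : ℤ) * (1 - (a : ℤ))) * qB q a j) *
          ((-1 : F) ^ c * q ^ ((c : ℤ) * (1 - ((d : ℤ) - (j : ℤ)))) * qB q (d - j) c))]
  rw [sumTZT hq hroot d a c hA hC]
  rw [Matrix.smul_apply, Zmul_apply, mulZ_apply, Tinv_apply, smul_eq_mul]
  have h2 : ((⟨d - a, by omega⟩ : Fin (d + 1)) : ℕ) = d - a := rfl
  have h3 : ((⟨d - c, by omega⟩ : Fin (d + 1)) : ℕ) = d - c := rfl
  rw [h2, h3, show ((d - c : ℕ) : ℤ) = (d : ℤ) - (c : ℤ) from by omega,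
    show ((d - a : ℕ) : ℤ) = (d : ℤ) - (a : ℤ) from by omega]
  have hsign : (-1 : F) ^ d * (-1 : F) ^ (d - c) = (-1 : F) ^ c := by
    rw [← pow_add, show d + (d - c) = c + 2 * (d - c) from by omega, pow_add, pow_mul]
    norm_num
  calc (-1 : F) ^ c * q ^ ((c : ℤ) * (1 - (d : ℤ)) - (a : ℤ) * ((d : ℤ) - (c : ℤ))) *
        qB q (d - a) (d - c)
      = ((-1 : F) ^ d * (-1 : F) ^ (d - c)) *
          q ^ ((c : ℤ) * (1 - (d : ℤ)) - (a : ℤ) * ((d : ℤ) - (c : ℤ))) * qB q (d - a) (d - c) := by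
        rw [hsign]
    _ = (-1 : F) ^ d * q ^ (-((d : ℤ) * ((d : ℤ) - 1))) *
          ((-1 : F) ^ (d - c) * q ^ (((d : ℤ) - (c : ℤ)) * (((d : ℤ) - (a : ℤ)) - 1)) *
            qB q (d - a) (d - c)) := by
        rw [show ((c : ℤ) * (1 - (d : ℤ)) - (a : ℤ) * ((d : ℤ) - (c : ℤ)))
            = (-((d : ℤ) * ((d : ℤ) - 1))) + (((d : ℤ) - (c : ℤ)) * (((d : ℤ) - (a : ℤ)) - 1))
            from by ring, zpow_add₀ hq]
        ring

end Matrices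

theorem stmt_8 {F : Type*} [Field F] (d : ℕ) (hd : 1 ≤ d) (q : F) (hq : q ≠ 0)
    (hroot : ∀ n : ℕ, 0 < n → q ^ n ≠ 1) :
    (Tmat d q * Zmat F d) * (Tmat d q * Zmat F d) * (Tmat d q * Zmat F d) =
      ((-1) ^ d * q ^ (-((d : ℤ) * ((d : ℤ) - 1)))) • 1 := by
  have hZZ := ZZ_eq_one (F := F) d
  have hTT := TinvT hq hroot d
  have h3 := TZT hq hroot d
  set T := Tmat d q
  set Z := Zmat F d
  set Ti := Tinv d q
  set cst : F := (-1 : F) ^ d * q ^ (-((d : ℤ) * ((d : ℤ) - 1)))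
  calc (T * Z) * (T * Z) * (T * Z)
      = (T * (Z * T)) * (Z * (T * Z)) := by noncomm_ring
    _ = (cst • (Z * (Ti * Z))) * (Z * (T * Z)) := by rw [h3]
    _ = cst • ((Z * (Ti * Z)) * (Z * (T * Z))) := by rw [smul_mul_assoc]
    _ = cst • ((Z * Ti) * (Z * Z) * (T * Z)) := by noncomm_ring
    _ = cst • ((Z * Ti) * (T * Z)) := by rw [hZZ, mul_one]
    _ = cst • (Z * (Ti * T) * Z) := by noncomm_ring
    _ = cst • (Z * Z) := by rw [hTT, mul_one]
    _ = cst • 1 := by rw [hZZ]
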